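/- (Petersen) Let r and k be positive even integers with k ≤ r. Then every r-regular finite simple graph has a k-factor. -/

import Mathlib

open SimpleGraph Finset

lemma darts_countP_eq {V : Type*} [DecidableEq V] {G : SimpleGraph V} (x : V) :
    ∀ {u v : V} (p : G.Walk u v),
      p.darts.countP (fun d => d.toProd.1 = x) + (if x = v then 1 else 0)
        = p.darts.countP (fun d => d.toProd.2 = x) + (if x = u then 1 else 0) := by
  intro u v p
  induction p with
  | nil => simp
  | @cons u w v h q ih =>
    simp only [Walk.darts_cons, List.countP_cons, decide_eq_true_eq]
    have h1 : (if (({ toProd := (u, w), adj := h } : G.Dart).toProd.1 = x) then 1 else 0)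
        = (if x = u then 1 else 0) := by
      by_cases hx : x = u <;> simp [hx, eq_comm]
    have h2 : (if (({ toProd := (u, w), adj := h } : G.Dart).toProd.2 = x) then 1 else 0)
        = (if x = w then 1 else 0) := by
      by_cases hx : x = w <;> simp [hx, eq_comm]
    rw [h1, h2]
    omega

lemma orient {V : Type*} [Fintype V] [DecidableEq V] :
    ∀ (n : ℕ) (G : SimpleGraph V) [DecidableRel G.Adj], G.edgeFinset.card ≤ n →
      (∀ v, Even (G.degree v)) →
      ∃ A : Finset (V × V),
        (∀ a ∈ A, G.Adj a.1 a.2) ∧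
        (∀ v w, G.Adj v w → ((v, w) ∈ A ↔ (w, v) ∉ A)) ∧
        (∀ v, (A.filter (fun a => a.1 = v)).card = (A.filter (fun a => a.2 = v)).card) := by
  intro n
  induction n with
  | zero =>
    intro G _ hcard heven
    have hno : ∀ v w : V, ¬ G.Adj v w := by
      intro v w h
      have hm : s(v,w) ∈ G.edgeFinset := by simpa [mem_edgeFinset] using h
      rw [Finset.card_eq_zero.1 (Nat.le_zero.1 hcard)] at hm
      simp at hm
    exact ⟨∅, by simp, fun v w h => absurd h (hno v w), by simp⟩
  | succ n ih =>
    intro G _ hcard heven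
    by_cases hne : G.edgeFinset = ∅
    · have hno : ∀ v w : V, ¬ G.Adj v w := by
        intro v w h
        have hm : s(v,w) ∈ G.edgeFinset := by simpa [mem_edgeFinset] using h
        rw [hne] at hm; simp at hm
      exact ⟨∅, by simp, fun v w h => absurd h (hno v w), by simp⟩
    -- there is an edge
    obtain ⟨e, he⟩ := Finset.nonempty_of_ne_empty hne
    induction e using Sym2.ind with
    | _ y z =>
    rw [mem_edgeFinset, mem_edgeSet] at he
    haveI : Nonempty V := ⟨y⟩
    -- longest path
    set P : ℕ → Prop := fun m => ∃ (a b : V) (p : G.Walk a b), p.IsPath ∧ p.length = m with hP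
    letI : DecidablePred P := Classical.decPred P
    have hP1 : P 1 := ⟨y, z, Walk.cons he Walk.nil, by simp [he.ne], rfl⟩
    have hcard1 : 1 ≤ Fintype.card V := Fintype.card_pos
    set N := Nat.findGreatest P (Fintype.card V) with hN
    have hN1 : 1 ≤ N := Nat.le_findGreatest hcard1 hP1
    have hPN : P N := Nat.findGreatest_spec hcard1 hP1
    have hmax : ∀ m, N < m → ¬ P m := by
      intro m hm hPm
      rcases hPm with ⟨a, b, p, hp, hlen⟩
      by_cases hmb : m ≤ Fintype.card V
      · exact Nat.findGreatest_is_greatest hm hmb ⟨a, b, p, hp, hlen⟩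
      · exact hmb (hlen ▸ (hp.length_lt).le)
    obtain ⟨a, b, p0, hp0, hlen0⟩ := hPN
    -- p0 is not nil
    cases p0 with
    | nil => rw [Walk.length_nil] at hlen0; omega
    | @cons _ c _ h' p' =>
    have hdeg_a : 1 < G.degree a := by
      have hcmem : c ∈ G.neighborFinset a := by simpa [SimpleGraph.mem_neighborFinset] using h'
      have hpos : 0 < G.degree a := Finset.card_pos.2 ⟨c, hcmem⟩
      rcases heven a with ⟨t, ht⟩
      omega
    obtain ⟨x, hxmem, hxc⟩ := Finset.exists_mem_ne hdeg_a c
    have hxa : G.Adj a x := by rwa [SimpleGraph.mem_neighborFinset] at hxmem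
    have hxsup : x ∈ (Walk.cons h' p').support := by
      by_contra hxs
      have hpath : (Walk.cons hxa.symm (Walk.cons h' p')).IsPath :=
        (Walk.cons_isPath_iff _ _).2 ⟨hp0, hxs⟩
      exact hmax (N+1) (Nat.lt_succ_self N) ⟨x, b, _, hpath, by simp [hlen0]⟩
    have hq : ((Walk.cons h' p').takeUntil x hxsup).IsPath := hp0.takeUntil hxsup
    have hnotedge : s(x, a) ∉ ((Walk.cons h' p').takeUntil x hxsup).edges := by
      intro hxe
      have hxe' : s(x,a) ∈ (Walk.cons h' p').edges :=
        Walk.edges_takeUntil_subset _ hxsup hxe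
      rw [Walk.edges_cons, List.mem_cons] at hxe'
      rcases hxe' with heq | hmem
      · rw [Sym2.eq_iff] at heq
        rcases heq with ⟨-, hac⟩ | ⟨hxceq, -⟩
        · exact h'.ne hac
        · exact hxc hxceq
      · have ha_sup : a ∈ p'.support := Walk.snd_mem_support_of_mem_edges p' hmem
        exact ((Walk.cons_isPath_iff _ _).1 hp0).2 ha_sup
    set c0 : G.Walk x x := Walk.cons hxa.symm ((Walk.cons h' p').takeUntil x hxsup) with hc0
    have hcyc : c0.IsCycle := (Walk.cons_isCycle_iff _ hxa.symm).2 ⟨hq, hnotedge⟩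
    have htrail : c0.IsTrail := hcyc.isCircuit.isTrail
    have hxaedge : s(x,a) ∈ c0.edges := by
      rw [hc0, Walk.edges_cons]; exact List.mem_cons_self
    set G' : SimpleGraph V := G.deleteEdges {e | e ∈ c0.edges} with hG'
    have hG'adj : ∀ v w : V, G'.Adj v w ↔ (G.Adj v w ∧ s(v,w) ∉ c0.edges) := by
      intro v w
      rw [hG', SimpleGraph.deleteEdges_adj]
      rfl
    letI : DecidableRel G'.Adj := fun v w => decidable_of_iff _ (hG'adj v w).symm
    have hNfilter : ∀ v, G'.neighborFinset v
        = (G.neighborFinset v).filter (fun w => s(v,w) ∉ c0.edges) := by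
      intro v
      ext w
      simp [SimpleGraph.mem_neighborFinset, hG'adj]
    have hcard2 : ∀ v, ((G.neighborFinset v).filter (fun w => s(v,w) ∈ c0.edges)).card
        = c0.edges.countP (fun e => v ∈ e) := by
      intro v
      rw [List.countP_eq_length_filter,
        ← List.toFinset_card_of_nodup (htrail.edges_nodup.filter _)]
      refine Finset.card_bij (fun w _ => s(v,w)) ?_ ?_ ?_
      · intro w hw
        rw [Finset.mem_filter] at hw
        rw [List.mem_toFinset, List.mem_filter]
        exact ⟨hw.2, by simp⟩
      · intro w1 h1 w2 h2 heq
        rw [Sym2.eq_iff] at heq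
        rcases heq with ⟨-, h⟩ | ⟨h1', -⟩
        · exact h
        · rw [Finset.mem_filter, SimpleGraph.mem_neighborFinset] at h2
          exact absurd h1' h2.1.ne
      · intro e hee
        rw [List.mem_toFinset, List.mem_filter, decide_eq_true_eq] at hee
        obtain ⟨hec, hev⟩ := hee
        have hspec := Sym2.other_spec hev
        have hadj : G.Adj v (Sym2.Mem.other hev) := by
          rw [← SimpleGraph.mem_edgeSet, hspec]
          exact Walk.edges_subset_edgeSet c0 hec
        refine ⟨Sym2.Mem.other hev, ?_, hspec⟩
        rw [Finset.mem_filter, SimpleGraph.mem_neighborFinset]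
        exact ⟨hadj, by rw [hspec]; exact hec⟩
    have hdegsplit : ∀ v, G'.degree v + c0.edges.countP (fun e => v ∈ e) = G.degree v := by
      intro v
      rw [SimpleGraph.degree, SimpleGraph.degree, hNfilter v, ← hcard2 v]
      have hsplit := Finset.card_filter_add_card_filter_not
        (s := G.neighborFinset v) (p := fun w => s(v,w) ∈ c0.edges)
      omega
    have hevenC : ∀ v, Even (c0.edges.countP (fun e => v ∈ e)) := by
      intro v
      exact (htrail.even_countP_edges_iff v).2 (fun h => absurd rfl h)
    have heven' : ∀ v, Even (G'.degree v) := by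
      intro v
      rcases heven v with ⟨t, ht⟩
      rcases hevenC v with ⟨s', hs⟩
      have := hdegsplit v
      exact ⟨t - s', by omega⟩
    have hGlt : G' < G := by
      refine lt_of_le_of_ne (SimpleGraph.deleteEdges_le _) ?_
      intro hEq
      have hx' : G'.Adj x a := by rw [hEq]; exact hxa.symm
      rw [hG'adj] at hx'
      exact hx'.2 hxaedge
    have hcard' : G'.edgeFinset.card ≤ n := by
      have hlt : G'.edgeFinset.card < G.edgeFinset.card :=
        Finset.card_lt_card (SimpleGraph.edgeFinset_ssubset_edgeFinset.2 hGlt)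
      omega
    obtain ⟨A', hA'1, hA'2, hA'3⟩ := ih G' hcard' heven'
    set Dl : List (V × V) := c0.darts.map SimpleGraph.Dart.toProd with hDl
    have hDl_edge : ∀ v w : V, (v,w) ∈ Dl → s(v,w) ∈ c0.edges := by
      intro v w hvw
      rw [hDl, List.mem_map] at hvw
      obtain ⟨d, hd, hdp⟩ := hvw
      have hde : d.edge = s(v,w) := by rw [SimpleGraph.Dart.edge, hdp]
      rw [← hde]
      exact List.mem_map_of_mem hd
    have hA'nc : ∀ v w : V, (v,w) ∈ A' → s(v,w) ∉ c0.edges := by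
      intro v w hvw
      have := hA'1 _ hvw
      rw [hG'adj] at this
      exact this.2
    have hdartsnodup : c0.darts.Nodup := by
      have hmap : (c0.darts.map SimpleGraph.Dart.edge).Nodup := htrail.edges_nodup
      exact hmap.of_map _
    have hDlnodup : Dl.Nodup := hdartsnodup.map SimpleGraph.Dart.toProd_injective
    have hexcl : ∀ v w : V, v ≠ w → (v,w) ∈ Dl → (w,v) ∈ Dl → False := by
      intro v w hvwne h1 h2
      rw [hDl, List.mem_map] at h1 h2
      obtain ⟨d1, hd1, hp1⟩ := h1
      obtain ⟨d2, hd2, hp2⟩ := h2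
      have hne : d1 ≠ d2 := by
        intro h
        rw [h, hp2] at hp1
        exact hvwne (congrArg Prod.snd hp1)
      have hedge : d1.edge = d2.edge := by
        rw [SimpleGraph.Dart.edge, SimpleGraph.Dart.edge, hp1, hp2]
        exact Sym2.eq_swap
      have hnodup2 : (c0.darts.map SimpleGraph.Dart.edge).Nodup := htrail.edges_nodup
      exact hne (List.inj_on_of_nodup_map hnodup2 hd1 hd2 hedge)
    have hexist : ∀ v w : V, s(v,w) ∈ c0.edges → (v,w) ∈ Dl ∨ (w,v) ∈ Dl := by
      intro v w hvw
      have hvw' : s(v,w) ∈ c0.darts.map SimpleGraph.Dart.edge := hvw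
      rw [List.mem_map] at hvw'
      obtain ⟨d, hd, hde⟩ := hvw'
      obtain ⟨⟨a1, a2⟩, hadj12⟩ := d
      rw [SimpleGraph.Dart.edge] at hde
      rw [Sym2.eq_iff] at hde
      rcases hde with ⟨h1, h2⟩ | ⟨h1, h2⟩
      · exact Or.inl (by rw [hDl, List.mem_map]; exact ⟨_, hd, Prod.ext h1 h2⟩)
      · exact Or.inr (by rw [hDl, List.mem_map]; exact ⟨_, hd, Prod.ext h1 h2⟩)
    have hdisj : Disjoint A' Dl.toFinset := by
      rw [Finset.disjoint_left]
      rintro ⟨v, w⟩ hvw hvw'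
      exact hA'nc v w hvw (hDl_edge v w (List.mem_toFinset.1 hvw'))
    refine ⟨A' ∪ Dl.toFinset, ?_, ?_, ?_⟩
    · rintro ⟨v, w⟩ hvw
      rcases Finset.mem_union.1 hvw with h | h
      · have := hA'1 _ h
        rw [hG'adj] at this
        exact this.1
      · rw [List.mem_toFinset, hDl, List.mem_map] at h
        obtain ⟨d, hd, hdp⟩ := h
        exact hdp ▸ d.adj
    · intro v w hvwadj
      by_cases hce : s(v,w) ∈ c0.edges
      · have hnA' : (v,w) ∉ A' := fun h => hA'nc v w h hce
        have hnA'2 : (w,v) ∉ A' := fun h => hA'nc w v h (by rwa [Sym2.eq_swap])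
        constructor
        · intro hmem hmem2
          rcases Finset.mem_union.1 hmem with h | h
          · exact hnA' h
          rcases Finset.mem_union.1 hmem2 with h2 | h2
          · exact hnA'2 h2
          exact hexcl v w hvwadj.ne (List.mem_toFinset.1 h) (List.mem_toFinset.1 h2)
        · intro hnmem
          rcases hexist v w hce with h | h
          · exact Finset.mem_union_right _ (List.mem_toFinset.2 h)
          · exact absurd (Finset.mem_union_right _ (List.mem_toFinset.2 h)) hnmem
      · have hnd1 : (v,w) ∉ Dl := fun h => hce (hDl_edge _ _ h)
        have hnd2 : (w,v) ∉ Dl := fun h => hce (by rw [Sym2.eq_swap]; exact hDl_edge _ _ h)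
        have hadj' : G'.Adj v w := by rw [hG'adj]; exact ⟨hvwadj, hce⟩
        have hiff := hA'2 v w hadj'
        constructor
        · intro hm hm2
          rcases Finset.mem_union.1 hm with h | h
          · rcases Finset.mem_union.1 hm2 with h2 | h2
            · exact (hiff.1 h) h2
            · exact hnd2 (List.mem_toFinset.1 h2)
          · exact hnd1 (List.mem_toFinset.1 h)
        · intro hnm
          have hnmA' : (w,v) ∉ A' := fun h => hnm (Finset.mem_union_left _ h)
          exact Finset.mem_union_left _ (hiff.2 hnmA')
    · intro v
      rw [Finset.filter_union, Finset.filter_union,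
        Finset.card_union_of_disjoint
          (hdisj.mono (Finset.filter_subset _ _) (Finset.filter_subset _ _)),
        Finset.card_union_of_disjoint
          (hdisj.mono (Finset.filter_subset _ _) (Finset.filter_subset _ _))]
      have hkey := Nat.add_right_cancel (darts_countP_eq (G := G) v c0)
      have hc1 : (Dl.toFinset.filter (fun a => a.1 = v)).card
          = c0.darts.countP (fun d => d.toProd.1 = v) := by
        have hset : Dl.toFinset.filter (fun a => a.1 = v)
            = (Dl.filter (fun a => a.1 = v)).toFinset := by
          ext w
          simp [List.mem_filter]
        rw [hset, List.toFinset_card_of_nodup (hDlnodup.filter _),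
          ← List.countP_eq_length_filter, hDl, List.countP_map]
        rfl
      have hc2 : (Dl.toFinset.filter (fun a => a.2 = v)).card
          = c0.darts.countP (fun d => d.toProd.2 = v) := by
        have hset : Dl.toFinset.filter (fun a => a.2 = v)
            = (Dl.filter (fun a => a.2 = v)).toFinset := by
          ext w
          simp [List.mem_filter]
        rw [hset, List.toFinset_card_of_nodup (hDlnodup.filter _),
          ← List.countP_eq_length_filter, hDl, List.countP_map]
        rfl
      have hAv := hA'3 v
      omega

lemma exists_good_fun {V : Type*} [Fintype V] [DecidableEq V] (G : SimpleGraph V)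
    [DecidableRel G.Adj] (r : ℕ) (hr : 0 < r) (hre : Even r)
    (hreg : ∀ v, G.degree v = r) :
    ∃ f : V → V, Function.Bijective f ∧ (∀ v, G.Adj v (f v)) ∧ ∀ v, f (f v) ≠ v := by
  obtain ⟨A, hA1, hA2, hA3⟩ :=
    orient G.edgeFinset.card G le_rfl (fun v => (hreg v) ▸ hre)
  have hnot : ∀ v w : V, (v,w) ∈ A → (w,v) ∈ A → False := by
    intro v w h1 h2
    exact ((hA2 v w (hA1 _ h1)).1 h1) h2
  -- split the neighborhood
  have hsplit : ∀ v, G.neighborFinset v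
      = ((A.filter (fun a => a.1 = v)).image Prod.snd)
        ∪ ((A.filter (fun a => a.2 = v)).image Prod.fst) := by
    intro v
    ext w
    simp only [SimpleGraph.mem_neighborFinset, Finset.mem_union, Finset.mem_image,
      Finset.mem_filter]
    constructor
    · intro h
      by_cases hm : (v, w) ∈ A
      · exact Or.inl ⟨(v, w), ⟨hm, rfl⟩, rfl⟩
      · have hm2 : (w, v) ∈ A := by
          by_contra hm2
          exact hm ((hA2 v w h).2 hm2)
        exact Or.inr ⟨(w, v), ⟨hm2, rfl⟩, rfl⟩
    · rintro (⟨⟨a1, a2⟩, ⟨hmem, h1⟩, h2⟩ | ⟨⟨a1, a2⟩, ⟨hmem, h1⟩, h2⟩)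
      · subst h1; subst h2; exact hA1 _ hmem
      · subst h1; subst h2; exact (hA1 _ hmem).symm
  have hinj1 : ∀ v, Set.InjOn Prod.snd (↑(A.filter (fun a => a.1 = v)) : Set (V × V)) := by
    intro v a ha b hb hab
    rw [Finset.coe_filter, Set.mem_setOf_eq] at ha hb
    exact Prod.ext (ha.2.trans hb.2.symm) hab
  have hinj2 : ∀ v, Set.InjOn Prod.fst (↑(A.filter (fun a => a.2 = v)) : Set (V × V)) := by
    intro v a ha b hb hab
    rw [Finset.coe_filter, Set.mem_setOf_eq] at ha hb
    exact Prod.ext hab (ha.2.trans hb.2.symm)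
  have hdisj : ∀ v, Disjoint ((A.filter (fun a => a.1 = v)).image Prod.snd)
      ((A.filter (fun a => a.2 = v)).image Prod.fst) := by
    intro v
    rw [Finset.disjoint_left]
    intro w hw1 hw2
    rw [Finset.mem_image] at hw1 hw2
    obtain ⟨⟨a1, a2⟩, ha, h2⟩ := hw1
    obtain ⟨⟨b1, b2⟩, hb, h2'⟩ := hw2
    rw [Finset.mem_filter] at ha hb
    simp only at h2 h2'
    have h1 := ha.2
    have h1' := hb.2
    simp only at h1 h1'
    subst h1; subst h1'; subst h2; subst h2'
    exact hnot _ _ ha.1 hb.1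
  have hsum : ∀ v, (A.filter (fun a => a.1 = v)).card + (A.filter (fun a => a.2 = v)).card
      = r := by
    intro v
    rw [← hreg v, SimpleGraph.degree, hsplit v,
      Finset.card_union_of_disjoint (hdisj v),
      Finset.card_image_of_injOn (hinj1 v), Finset.card_image_of_injOn (hinj2 v)]
  obtain ⟨m, hmr⟩ := hre
  have hm : 0 < m := by omega
  have hout : ∀ v, (A.filter (fun a => a.1 = v)).card = m := by
    intro v
    have h1 := hsum v
    have h2 := hA3 v
    omega
  have hin : ∀ v, (A.filter (fun a => a.2 = v)).card = m := by
    intro v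
    have h1 := hsum v
    have h2 := hA3 v
    omega
  -- Hall
  set t : V → Finset V := fun v => (A.filter (fun a => a.1 = v)).image Prod.snd with ht
  have htcard : ∀ v, (t v).card = m := by
    intro v
    rw [ht, Finset.card_image_of_injOn (hinj1 v), hout v]
  have hall : ∀ S : Finset V, S.card ≤ (S.biUnion t).card := by
    intro S
    have hBcard : (A.filter (fun a => a.1 ∈ S)).card = m * S.card := by
      have hB : A.filter (fun a => a.1 ∈ S) = S.biUnion (fun v => A.filter (fun a => a.1 = v)) := by
        ext a
        simp only [Finset.mem_filter, Finset.mem_biUnion]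
        constructor
        · rintro ⟨ha, hs⟩; exact ⟨a.1, hs, ha, rfl⟩
        · rintro ⟨v, hv, ha, h1⟩; exact ⟨ha, h1 ▸ hv⟩
      rw [hB, Finset.card_biUnion]
      · rw [Finset.sum_congr rfl (fun v _ => hout v), Finset.sum_const, smul_eq_mul,
          mul_comm]
      · intro v1 _ v2 _ hne
        rw [Function.onFun, Finset.disjoint_left]
        intro a ha1 ha2
        rw [Finset.mem_filter] at ha1 ha2
        exact hne (ha1.2.symm.trans ha2.2)
    have hsub : A.filter (fun a => a.1 ∈ S)
        ⊆ (S.biUnion t).biUnion (fun w => A.filter (fun a => a.2 = w)) := by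
      intro a ha
      rw [Finset.mem_filter] at ha
      rw [Finset.mem_biUnion]
      refine ⟨a.2, ?_, Finset.mem_filter.2 ⟨ha.1, rfl⟩⟩
      rw [Finset.mem_biUnion]
      exact ⟨a.1, ha.2, Finset.mem_image.2 ⟨a, Finset.mem_filter.2 ⟨ha.1, rfl⟩, rfl⟩⟩
    have hle : m * S.card ≤ m * (S.biUnion t).card := by
      calc m * S.card = (A.filter (fun a => a.1 ∈ S)).card := hBcard.symm
        _ ≤ ((S.biUnion t).biUnion (fun w => A.filter (fun a => a.2 = w))).card :=
            Finset.card_le_card hsub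
        _ ≤ ∑ w ∈ S.biUnion t, (A.filter (fun a => a.2 = w)).card :=
            Finset.card_biUnion_le
        _ = m * (S.biUnion t).card := by
            rw [Finset.sum_congr rfl (fun w _ => hin w), Finset.sum_const, smul_eq_mul,
              mul_comm]
    exact Nat.le_of_mul_le_mul_left hle hm
  obtain ⟨f, hfinj, hft⟩ := (Finset.all_card_le_biUnion_card_iff_exists_injective t).1 hall
  have hfA : ∀ v, (v, f v) ∈ A := by
    intro v
    have := hft v
    rw [ht, Finset.mem_image] at this
    obtain ⟨⟨a1, a2⟩, ha, h2⟩ := this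
    rw [Finset.mem_filter] at ha
    have h1 := ha.2
    simp only at h1 h2
    subst h1; subst h2
    exact ha.1
  refine ⟨f, (Finite.injective_iff_bijective).1 hfinj, fun v => hA1 _ (hfA v), ?_⟩
  intro v hffv
  have h2 : (f v, v) ∈ A := by
    have := hfA (f v)
    rwa [hffv] at this
  exact hnot v (f v) (hfA v) h2

lemma factor_aux {V : Type*} [Fintype V] [DecidableEq V] :
    ∀ (j : ℕ) (G : SimpleGraph V) (r : ℕ), Even r → 2 * j ≤ r →
      (∀ v, (G.neighborSet v).ncard = r) →
      ∃ F : SimpleGraph V, F ≤ G ∧ ∀ v, (F.neighborSet v).ncard = 2 * j := by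
  intro j
  induction j with
  | zero =>
    intro G r _ _ _
    refine ⟨⊥, bot_le, fun v => ?_⟩
    have hbot : (⊥ : SimpleGraph V).neighborSet v = ∅ := by ext w; simp
    simp [hbot]
  | succ j ih =>
    intro G r hre hjr hreg
    letI : DecidableRel G.Adj := Classical.decRel _
    have hncard_deg : ∀ (H : SimpleGraph V) [DecidableRel H.Adj] (v : V),
        (H.neighborSet v).ncard = H.degree v := by
      intro H _ v
      rw [SimpleGraph.degree, SimpleGraph.neighborFinset_def, Set.ncard_eq_toFinset_card']
    have hdeg : ∀ v, G.degree v = r := fun v => (hncard_deg G v).symm.trans (hreg v)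
    have hr2 : 2 ≤ r := by omega
    obtain ⟨f, hbij, hfadj, hff⟩ := exists_good_fun G r (by omega) hre hdeg
    set e : V ≃ V := Equiv.ofBijective f hbij with he
    have hesymm : ∀ v, f (e.symm v) = v := fun v => e.apply_symm_apply v
    set F2 : SimpleGraph V := SimpleGraph.fromRel (fun a b => b = f a) with hF2
    have hF2adj : ∀ v w, F2.Adj v w ↔ v ≠ w ∧ (w = f v ∨ v = f w) := by
      intro v w
      rw [hF2, SimpleGraph.fromRel_adj]
    have hF2le : F2 ≤ G := by
      intro v w hvw
      rw [hF2adj] at hvw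
      rcases hvw.2 with h | h
      · exact h ▸ hfadj v
      · exact (h ▸ hfadj w).symm
    have hF2N : ∀ v, F2.neighborSet v = {f v, e.symm v} := by
      intro v
      ext w
      simp only [SimpleGraph.mem_neighborSet, hF2adj, Set.mem_insert_iff, Set.mem_singleton_iff]
      constructor
      · rintro ⟨hne, h | h⟩
        · exact Or.inl h
        · refine Or.inr ?_
          have : e w = v := h.symm
          rw [← this, Equiv.symm_apply_apply]
      · rintro (h | h)
        · subst h
          exact ⟨(hfadj v).ne, Or.inl rfl⟩
        · subst h
          refine ⟨?_, Or.inr (hesymm v).symm⟩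
          intro hveq
          have h2 := hesymm v
          rw [← hveq] at h2
          exact (hfadj v).ne' h2
    have hfne : ∀ v, f v ≠ e.symm v := by
      intro v h
      have h2 := hesymm v
      rw [← h] at h2
      exact hff v h2
    have hF2ncard : ∀ v, (F2.neighborSet v).ncard = 2 := by
      intro v
      rw [hF2N v]
      exact Set.ncard_pair (hfne v)
    set G' : SimpleGraph V := G \ F2 with hG'
    letI : DecidableRel G'.Adj := Classical.decRel _
    have hG'adj : ∀ v w, G'.Adj v w ↔ G.Adj v w ∧ ¬ F2.Adj v w := by
      intro v w
      rw [hG', SimpleGraph.sdiff_adj]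
    have hpairsub : ∀ v, ({f v, e.symm v} : Finset V) ⊆ G.neighborFinset v := by
      intro v w hw
      rw [Finset.mem_insert, Finset.mem_singleton] at hw
      rw [SimpleGraph.mem_neighborFinset]
      rcases hw with h | h
      · exact h ▸ hfadj v
      · subst h
        have h2 := hfadj (e.symm v)
        rw [hesymm v] at h2
        exact h2.symm
    have hG'N : ∀ v, G'.neighborFinset v = G.neighborFinset v \ {f v, e.symm v} := by
      intro v
      ext w
      rw [Finset.mem_sdiff, SimpleGraph.mem_neighborFinset, SimpleGraph.mem_neighborFinset,
        hG'adj]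
      constructor
      · rintro ⟨h1, h2⟩
        refine ⟨h1, ?_⟩
        intro hmem
        apply h2
        rw [hF2adj]
        rw [Finset.mem_insert, Finset.mem_singleton] at hmem
        rcases hmem with h | h
        · exact ⟨h1.ne, Or.inl h⟩
        · subst h
          exact ⟨h1.ne, Or.inr (hesymm v).symm⟩
      · rintro ⟨h1, h2⟩
        refine ⟨h1, ?_⟩
        intro hadj2
        apply h2
        have hmem : w ∈ F2.neighborSet v := hadj2
        rw [hF2N v] at hmem
        rw [Finset.mem_insert, Finset.mem_singleton]
        simpa using hmem
    have hdeg' : ∀ v, (G'.neighborSet v).ncard = r - 2 := by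
      intro v
      rw [hncard_deg G' v, SimpleGraph.degree, hG'N v, Finset.card_sdiff_of_subset (hpairsub v),
        Finset.card_pair (hfne v)]
      have hcardv : (G.neighborFinset v).card = r := hdeg v
      rw [hcardv]
    have hre' : Even (r - 2) := by
      rcases hre with ⟨t, ht⟩
      exact ⟨t - 1, by omega⟩
    obtain ⟨F', hF'le, hF'ncard⟩ := ih G' (r - 2) hre' (by omega) hdeg'
    refine ⟨F' ⊔ F2, sup_le (hF'le.trans sdiff_le) hF2le, ?_⟩
    intro v
    have hNsup : (F' ⊔ F2).neighborSet v = F'.neighborSet v ∪ F2.neighborSet v := by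
      ext w
      simp [SimpleGraph.mem_neighborSet, SimpleGraph.sup_adj]
    have hdisjN : Disjoint (F'.neighborSet v) (F2.neighborSet v) := by
      rw [Set.disjoint_left]
      intro w hw1 hw2
      have hw3 : G'.Adj v w := hF'le hw1
      rw [hG'adj] at hw3
      exact hw3.2 hw2
    rw [hNsup, Set.ncard_union_eq hdisjN (Set.toFinite _) (Set.toFinite _), hF'ncard v,
      hF2ncard v]
    omega

/-- A graph is `r`-regular if every vertex has degree `r`. -/
def IsRegular' {V : Type*} [Fintype V] (G : SimpleGraph V) (r : ℕ) : Prop :=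
  ∀ v : V, (G.neighborSet v).ncard = r

/-- A `k`-factor of `G` is a spanning subgraph `F ≤ G` in which every vertex
has degree exactly `k`. -/
def HasKFactor {V : Type*} [Fintype V] (G : SimpleGraph V) (k : ℕ) : Prop :=
  ∃ F : SimpleGraph V, F ≤ G ∧ ∀ v : V, (F.neighborSet v).ncard = k

/-- (Petersen) Let `r` and `k` be positive even integers with `k ≤ r`. Then
every `r`-regular finite simple graph has a `k`-factor. -/
theorem stmt_6 (r k : ℕ) (hr : 0 < r) (hk : 0 < k) (hre : Even r)
    (hke : Even k) (hkr : k ≤ r) {V : Type*} [Fintype V]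
    (G : SimpleGraph V) (hreg : IsRegular' G r) :
    HasKFactor G k := by
  classical
  rcases hke with ⟨t, ht⟩
  obtain ⟨F, hFle, hFcard⟩ := factor_aux t G r hre (by omega) hreg
  exact ⟨F, hFle, fun v => by rw [hFcard v]; omega⟩
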